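/- Weak normalization of the simply-typed λ-calculus with sums: for every closed well-typed term ⊢ t : A, the μμ̃ configuration ⟨⟦t⟧ | α⟩ reduces to a normal configuration. -/

import Mathlib

mutual
/-- μμ̃ machine terms. -/
inductive MTm where
  | var : Nat → MTm
  | mu : MMach → MTm            -- μα.m, binds co-variable 0
  | muPair : MMach → MTm        -- μ(x·α).m, binds variable 0 and co-variable 0
  | injl : MTm → MTm
  | injr : MTm → MTm
/-- μμ̃ machine co-terms (contexts). -/
inductive MCo where
  | covar : Nat → MCo
  | cons : MTm → MCo → MCo      -- t·e
  | mutilde : MMach → MCo       -- μ̃x.m, binds variable 0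
  | case : MMach → MMach → MCo  -- μ̃[inj₁x₁.m₁ | inj₂x₂.m₂], each branch binds variable 0
/-- μμ̃ machine configurations ⟨t | e⟩. -/
inductive MMach where
  | conf : MTm → MCo → MMach
end

/-- Lift a renaming under a binder. -/
def liftN (f : Nat → Nat) : Nat → Nat
  | 0 => 0
  | n + 1 => f n + 1

mutual
/-- Simultaneous renaming of variables (ft) and co-variables (fc). -/
def MTm.rename (ft fc : Nat → Nat) : MTm → MTm
  | .var n => .var (ft n)
  | .mu m => .mu (MMach.rename ft (liftN fc) m)
  | .muPair m => .muPair (MMach.rename (liftN ft) (liftN fc) m)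
  | .injl t => .injl (MTm.rename ft fc t)
  | .injr t => .injr (MTm.rename ft fc t)
def MCo.rename (ft fc : Nat → Nat) : MCo → MCo
  | .covar n => .covar (fc n)
  | .cons t e => .cons (MTm.rename ft fc t) (MCo.rename ft fc e)
  | .mutilde m => .mutilde (MMach.rename (liftN ft) fc m)
  | .case m₁ m₂ => .case (MMach.rename (liftN ft) fc m₁) (MMach.rename (liftN ft) fc m₂)
def MMach.rename (ft fc : Nat → Nat) : MMach → MMach
  | .conf t e => .conf (MTm.rename ft fc t) (MCo.rename ft fc e)
end

/-- Lift a substitution under a variable binder. -/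
def upT (σt : Nat → MTm) (σc : Nat → MCo) : (Nat → MTm) × (Nat → MCo) :=
  (fun n => match n with
    | 0 => .var 0
    | n + 1 => MTm.rename Nat.succ id (σt n),
   fun n => MCo.rename Nat.succ id (σc n))

/-- Lift a substitution under a co-variable binder. -/
def upC (σt : Nat → MTm) (σc : Nat → MCo) : (Nat → MTm) × (Nat → MCo) :=
  (fun n => MTm.rename id Nat.succ (σt n),
   fun n => match n with
    | 0 => .covar 0
    | n + 1 => MCo.rename id Nat.succ (σc n))

mutual
/-- Simultaneous substitution of terms for variables and co-terms for co-variables. -/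
def MTm.subst (σt : Nat → MTm) (σc : Nat → MCo) : MTm → MTm
  | .var n => σt n
  | .mu m => .mu (MMach.subst (upC σt σc).1 (upC σt σc).2 m)
  | .muPair m =>
      .muPair (MMach.subst (upT (upC σt σc).1 (upC σt σc).2).1
                           (upT (upC σt σc).1 (upC σt σc).2).2 m)
  | .injl t => .injl (MTm.subst σt σc t)
  | .injr t => .injr (MTm.subst σt σc t)
def MCo.subst (σt : Nat → MTm) (σc : Nat → MCo) : MCo → MCo
  | .covar n => σc n
  | .cons t e => .cons (MTm.subst σt σc t) (MCo.subst σt σc e)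
  | .mutilde m => .mutilde (MMach.subst (upT σt σc).1 (upT σt σc).2 m)
  | .case m₁ m₂ => .case (MMach.subst (upT σt σc).1 (upT σt σc).2 m₁)
                         (MMach.subst (upT σt σc).1 (upT σt σc).2 m₂)
def MMach.subst (σt : Nat → MTm) (σc : Nat → MCo) : MMach → MMach
  | .conf t e => .conf (MTm.subst σt σc t) (MCo.subst σt σc e)
end

/-- m[e/α] : substitute co-term `e` for co-variable 0. -/
def MMach.substCo (m : MMach) (e : MCo) : MMach :=
  MMach.subst MTm.var (fun n => match n with | 0 => e | n + 1 => .covar n) m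

/-- m[t/x] : substitute term `t` for variable 0. -/
def MMach.substTm (m : MMach) (t : MTm) : MMach :=
  MMach.subst (fun n => match n with | 0 => t | n + 1 => .var n) MCo.covar m

/-- m[t/x, e/α] : substitute both a term and a co-term. -/
def MMach.substTmCo (m : MMach) (t : MTm) (e : MCo) : MMach :=
  MMach.subst (fun n => match n with | 0 => t | n + 1 => .var n)
              (fun n => match n with | 0 => e | n + 1 => .covar n) m

mutual
/-- Reduction of μμ̃ terms (congruence). -/
inductive StepT : MTm → MTm → Prop
  | mu {m m'} : StepM m m' → StepT (.mu m) (.mu m')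
  | muPair {m m'} : StepM m m' → StepT (.muPair m) (.muPair m')
  | injl {t t'} : StepT t t' → StepT (.injl t) (.injl t')
  | injr {t t'} : StepT t t' → StepT (.injr t) (.injr t')
/-- Reduction of μμ̃ co-terms (congruence). -/
inductive StepC : MCo → MCo → Prop
  | consl {t t'} (e) : StepT t t' → StepC (.cons t e) (.cons t' e)
  | consr (t) {e e'} : StepC e e' → StepC (.cons t e) (.cons t e')
  | mutilde {m m'} : StepM m m' → StepC (.mutilde m) (.mutilde m')
  | casel {m₁ m₁'} (m₂) : StepM m₁ m₁' → StepC (.case m₁ m₂) (.case m₁' m₂)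
  | caser (m₁) {m₂ m₂'} : StepM m₂ m₂' → StepC (.case m₁ m₂) (.case m₁ m₂')
/-- Reduction of μμ̃ machine configurations. -/
inductive StepM : MMach → MMach → Prop
  | mu (m : MMach) (e : MCo) : StepM (.conf (.mu m) e) (m.substCo e)
  | mutilde (t : MTm) (m : MMach) : StepM (.conf t (.mutilde m)) (m.substTm t)
  | muPair (m : MMach) (u : MTm) (e : MCo) :
      StepM (.conf (.muPair m) (.cons u e)) (m.substTmCo u e)
  | casel (t : MTm) (m₁ m₂ : MMach) :
      StepM (.conf (.injl t) (.case m₁ m₂)) (m₁.substTm t)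
  | caser (t : MTm) (m₁ m₂ : MMach) :
      StepM (.conf (.injr t) (.case m₁ m₂)) (m₂.substTm t)
  | congT {t t'} (e) : StepT t t' → StepM (.conf t e) (.conf t' e)
  | congC (t) {e e'} : StepC e e' → StepM (.conf t e) (.conf t e')
end

/-- Source λ-calculus with sums (de Bruijn). In `case t u₁ u₂` each branch binds
variable 0. -/
inductive LTm where
  | var : Nat → LTm
  | lam : LTm → LTm
  | app : LTm → LTm → LTm
  | injl : LTm → LTm
  | injr : LTm → LTm
  | case : LTm → LTm → LTm → LTm

/-- Compilation of λ-terms with sums into the μμ̃ machine (call-by-name). -/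
def transl : LTm → MTm
  | .var n => .var n
  | .lam t => .muPair (.conf (transl t) (.covar 0))
  | .app t u => .mu (.conf (transl t) (.cons (transl u) (.covar 0)))
  | .injl t => .injl (transl t)
  | .injr t => .injr (transl t)
  | .case t u₁ u₂ =>
      .mu (.conf (transl t)
        (.case (.conf (transl u₁) (.covar 0)) (.conf (transl u₂) (.covar 0))))

/-- Simple types: a (positive) base type, function types and sum types. -/
inductive Ty where
  | base : Ty
  | arrow : Ty → Ty → Ty
  | sum : Ty → Ty → Ty

/-- Typing judgment of the simply-typed λ-calculus with sums. -/
inductive HasTy : List Ty → LTm → Ty → Prop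
  | var {Γ n A} : Γ[n]? = some A → HasTy Γ (.var n) A
  | lam {Γ t A B} : HasTy (A :: Γ) t B → HasTy Γ (.lam t) (.arrow A B)
  | app {Γ t u A B} : HasTy Γ t (.arrow A B) → HasTy Γ u A → HasTy Γ (.app t u) B
  | injl {Γ t A B} : HasTy Γ t A → HasTy Γ (.injl t) (.sum A B)
  | injr {Γ t A B} : HasTy Γ t B → HasTy Γ (.injr t) (.sum A B)
  | case {Γ t u₁ u₂ A B C} : HasTy Γ t (.sum A B) → HasTy (A :: Γ) u₁ C →
      HasTy (B :: Γ) u₂ C → HasTy Γ (.case t u₁ u₂) C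

-- ===== auxiliary development =====
namespace WNaux

theorem liftN_id : liftN id = id := by
  funext n; cases n <;> rfl

theorem liftN_comp (f g : Nat → Nat) : liftN (g ∘ f) = liftN g ∘ liftN f := by
  funext n; cases n <;> rfl

mutual
theorem rrT : ∀ (t : MTm) (f g f' g' : Nat → Nat),
    (t.rename f g).rename f' g' = t.rename (f' ∘ f) (g' ∘ g)
  | .var n, _, _, _, _ => rfl
  | .mu m, f, g, f', g' => by
      simp [MTm.rename, rrM m, liftN_comp]
  | .muPair m, f, g, f', g' => by
      simp [MTm.rename, rrM m, liftN_comp]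
  | .injl t, f, g, f', g' => by simp [MTm.rename, rrT t]
  | .injr t, f, g, f', g' => by simp [MTm.rename, rrT t]
theorem rrC : ∀ (e : MCo) (f g f' g' : Nat → Nat),
    (e.rename f g).rename f' g' = e.rename (f' ∘ f) (g' ∘ g)
  | .covar n, _, _, _, _ => rfl
  | .cons t e, f, g, f', g' => by simp [MCo.rename, rrT t, rrC e]
  | .mutilde m, f, g, f', g' => by simp [MCo.rename, rrM m, liftN_comp]
  | .case m₁ m₂, f, g, f', g' => by simp [MCo.rename, rrM m₁, rrM m₂, liftN_comp]
theorem rrM : ∀ (m : MMach) (f g f' g' : Nat → Nat),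
    (m.rename f g).rename f' g' = m.rename (f' ∘ f) (g' ∘ g)
  | .conf t e, f, g, f', g' => by simp [MMach.rename, rrT t, rrC e]
end

mutual
theorem ridT : ∀ (t : MTm), t.rename id id = t
  | .var n => rfl
  | .mu m => by simp [MTm.rename, liftN_id, ridM m]
  | .muPair m => by simp [MTm.rename, liftN_id, ridM m]
  | .injl t => by simp [MTm.rename, ridT t]
  | .injr t => by simp [MTm.rename, ridT t]
theorem ridC : ∀ (e : MCo), e.rename id id = e
  | .covar n => rfl
  | .cons t e => by simp [MCo.rename, ridT t, ridC e]
  | .mutilde m => by simp [MCo.rename, liftN_id, ridM m]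
  | .case m₁ m₂ => by simp [MCo.rename, liftN_id, ridM m₁, ridM m₂]
theorem ridM : ∀ (m : MMach), m.rename id id = m
  | .conf t e => by simp [MMach.rename, ridT t, ridC e]
end

end WNaux
namespace WNaux

theorem liftN_succ (g : Nat → Nat) : liftN g ∘ Nat.succ = Nat.succ ∘ g := by
  funext n; rfl

-- up commutation with pre-composition by renaming
theorem upT_ren (σt : Nat → MTm) (σc : Nat → MCo) (f g : Nat → Nat) :
    upT (σt ∘ f) (σc ∘ g) = ((upT σt σc).1 ∘ liftN f, (upT σt σc).2 ∘ g) := by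
  refine Prod.ext ?_ rfl
  funext n; cases n <;> rfl

theorem upC_ren (σt : Nat → MTm) (σc : Nat → MCo) (f g : Nat → Nat) :
    upC (σt ∘ f) (σc ∘ g) = ((upC σt σc).1 ∘ f, (upC σt σc).2 ∘ liftN g) := by
  refine Prod.ext rfl ?_
  funext n; cases n <;> rfl

mutual
theorem srT : ∀ (t : MTm) (f g : Nat → Nat) (σt : Nat → MTm) (σc : Nat → MCo),
    (t.rename f g).subst σt σc = t.subst (σt ∘ f) (σc ∘ g)
  | .var n, _, _, _, _ => rfl
  | .mu m, f, g, σt, σc => by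
      simp [MTm.rename, MTm.subst, srM m, upC_ren]
  | .muPair m, f, g, σt, σc => by
      simp [MTm.rename, MTm.subst, srM m, upC_ren, upT_ren]
  | .injl t, f, g, σt, σc => by simp [MTm.rename, MTm.subst, srT t]
  | .injr t, f, g, σt, σc => by simp [MTm.rename, MTm.subst, srT t]
theorem srC : ∀ (e : MCo) (f g : Nat → Nat) (σt : Nat → MTm) (σc : Nat → MCo),
    (e.rename f g).subst σt σc = e.subst (σt ∘ f) (σc ∘ g)
  | .covar n, _, _, _, _ => rfl
  | .cons t e, f, g, σt, σc => by simp [MCo.rename, MCo.subst, srT t, srC e]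
  | .mutilde m, f, g, σt, σc => by simp [MCo.rename, MCo.subst, srM m, upT_ren]
  | .case m₁ m₂, f, g, σt, σc => by
      simp [MCo.rename, MCo.subst, srM m₁, srM m₂, upT_ren]
theorem srM : ∀ (m : MMach) (f g : Nat → Nat) (σt : Nat → MTm) (σc : Nat → MCo),
    (m.rename f g).subst σt σc = m.subst (σt ∘ f) (σc ∘ g)
  | .conf t e, f, g, σt, σc => by simp [MMach.rename, MMach.subst, srT t, srC e]
end

-- up commutation with post-composition by renaming
theorem upT_ren' (σt : Nat → MTm) (σc : Nat → MCo) (f g : Nat → Nat) :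
    upT (fun n => (σt n).rename f g) (fun n => (σc n).rename f g) =
      (fun n => ((upT σt σc).1 n).rename (liftN f) g,
       fun n => ((upT σt σc).2 n).rename (liftN f) g) := by
  refine Prod.ext ?_ ?_ <;> funext n
  · cases n with
    | zero => rfl
    | succ n =>
        show MTm.rename Nat.succ id ((σt n).rename f g)
            = (MTm.rename Nat.succ id (σt n)).rename (liftN f) g
        rw [rrT, rrT]; congr 1 <;> funext k <;> rfl
  · show MCo.rename Nat.succ id ((σc n).rename f g)
        = (MCo.rename Nat.succ id (σc n)).rename (liftN f) g
    rw [rrC, rrC]; congr 1 <;> funext k <;> rfl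

theorem upC_ren' (σt : Nat → MTm) (σc : Nat → MCo) (f g : Nat → Nat) :
    upC (fun n => (σt n).rename f g) (fun n => (σc n).rename f g) =
      (fun n => ((upC σt σc).1 n).rename f (liftN g),
       fun n => ((upC σt σc).2 n).rename f (liftN g)) := by
  refine Prod.ext ?_ ?_ <;> funext n
  · show MTm.rename id Nat.succ ((σt n).rename f g)
        = (MTm.rename id Nat.succ (σt n)).rename f (liftN g)
    rw [rrT, rrT]; congr 1 <;> funext k <;> rfl
  · cases n with
    | zero => rfl
    | succ n =>
        show MCo.rename id Nat.succ ((σc n).rename f g)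
            = (MCo.rename id Nat.succ (σc n)).rename f (liftN g)
        rw [rrC, rrC]; congr 1 <;> funext k <;> rfl

mutual
theorem rsT : ∀ (t : MTm) (σt : Nat → MTm) (σc : Nat → MCo) (f g : Nat → Nat),
    (t.subst σt σc).rename f g
      = t.subst (fun n => (σt n).rename f g) (fun n => (σc n).rename f g)
  | .var n, _, _, _, _ => rfl
  | .mu m, σt, σc, f, g => by
      simp [MTm.subst, MTm.rename, rsM m, upC_ren']
  | .muPair m, σt, σc, f, g => by
      simp only [MTm.subst, MTm.rename, rsM m, upC_ren', upT_ren']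
  | .injl t, σt, σc, f, g => by simp [MTm.subst, MTm.rename, rsT t]
  | .injr t, σt, σc, f, g => by simp [MTm.subst, MTm.rename, rsT t]
theorem rsC : ∀ (e : MCo) (σt : Nat → MTm) (σc : Nat → MCo) (f g : Nat → Nat),
    (e.subst σt σc).rename f g
      = e.subst (fun n => (σt n).rename f g) (fun n => (σc n).rename f g)
  | .covar n, _, _, _, _ => rfl
  | .cons t e, σt, σc, f, g => by simp [MCo.subst, MCo.rename, rsT t, rsC e]
  | .mutilde m, σt, σc, f, g => by simp [MCo.subst, MCo.rename, rsM m, upT_ren']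
  | .case m₁ m₂, σt, σc, f, g => by
      simp [MCo.subst, MCo.rename, rsM m₁, rsM m₂, upT_ren']
theorem rsM : ∀ (m : MMach) (σt : Nat → MTm) (σc : Nat → MCo) (f g : Nat → Nat),
    (m.subst σt σc).rename f g
      = m.subst (fun n => (σt n).rename f g) (fun n => (σc n).rename f g)
  | .conf t e, σt, σc, f, g => by simp [MMach.subst, MMach.rename, rsT t, rsC e]
end

end WNaux
namespace WNaux

theorem upT_comp (σt τt : Nat → MTm) (σc τc : Nat → MCo) :
    upT (fun n => (σt n).subst τt τc) (fun n => (σc n).subst τt τc) =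
      (fun n => ((upT σt σc).1 n).subst (upT τt τc).1 (upT τt τc).2,
       fun n => ((upT σt σc).2 n).subst (upT τt τc).1 (upT τt τc).2) := by
  refine Prod.ext ?_ ?_ <;> funext n
  · cases n with
    | zero => rfl
    | succ n =>
        show MTm.rename Nat.succ id ((σt n).subst τt τc)
            = (MTm.rename Nat.succ id (σt n)).subst (upT τt τc).1 (upT τt τc).2
        rw [rsT, srT]
        congr 1 <;> funext k <;> rfl
  · show MCo.rename Nat.succ id ((σc n).subst τt τc)
        = (MCo.rename Nat.succ id (σc n)).subst (upT τt τc).1 (upT τt τc).2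
    rw [rsC, srC]
    congr 1 <;> funext k <;> rfl

theorem upC_comp (σt τt : Nat → MTm) (σc τc : Nat → MCo) :
    upC (fun n => (σt n).subst τt τc) (fun n => (σc n).subst τt τc) =
      (fun n => ((upC σt σc).1 n).subst (upC τt τc).1 (upC τt τc).2,
       fun n => ((upC σt σc).2 n).subst (upC τt τc).1 (upC τt τc).2) := by
  refine Prod.ext ?_ ?_ <;> funext n
  · show MTm.rename id Nat.succ ((σt n).subst τt τc)
        = (MTm.rename id Nat.succ (σt n)).subst (upC τt τc).1 (upC τt τc).2
    rw [rsT, srT]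
    congr 1 <;> funext k <;> rfl
  · cases n with
    | zero => rfl
    | succ n =>
        show MCo.rename id Nat.succ ((σc n).subst τt τc)
            = (MCo.rename id Nat.succ (σc n)).subst (upC τt τc).1 (upC τt τc).2
        rw [rsC, srC]
        congr 1 <;> funext k <;> rfl

mutual
theorem ssT : ∀ (t : MTm) (σt τt : Nat → MTm) (σc τc : Nat → MCo),
    (t.subst σt σc).subst τt τc
      = t.subst (fun n => (σt n).subst τt τc) (fun n => (σc n).subst τt τc)
  | .var n, _, _, _, _ => rfl
  | .mu m, σt, τt, σc, τc => by
      simp only [MTm.subst, ssM m, upC_comp]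
  | .muPair m, σt, τt, σc, τc => by
      simp only [MTm.subst, ssM m, upC_comp, upT_comp]
  | .injl t, σt, τt, σc, τc => by simp [MTm.subst, ssT t]
  | .injr t, σt, τt, σc, τc => by simp [MTm.subst, ssT t]
theorem ssC : ∀ (e : MCo) (σt τt : Nat → MTm) (σc τc : Nat → MCo),
    (e.subst σt σc).subst τt τc
      = e.subst (fun n => (σt n).subst τt τc) (fun n => (σc n).subst τt τc)
  | .covar n, _, _, _, _ => rfl
  | .cons t e, σt, τt, σc, τc => by simp [MCo.subst, ssT t, ssC e]
  | .mutilde m, σt, τt, σc, τc => by simp only [MCo.subst, ssM m, upT_comp]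
  | .case m₁ m₂, σt, τt, σc, τc => by
      simp only [MCo.subst, ssM m₁, ssM m₂, upT_comp]
theorem ssM : ∀ (m : MMach) (σt τt : Nat → MTm) (σc τc : Nat → MCo),
    (m.subst σt σc).subst τt τc
      = m.subst (fun n => (σt n).subst τt τc) (fun n => (σc n).subst τt τc)
  | .conf t e, σt, τt, σc, τc => by simp [MMach.subst, ssT t, ssC e]
end

-- substitution by variables/covariables is renaming
theorem upT_var (f g : Nat → Nat) :
    upT (fun n => MTm.var (f n)) (fun n => MCo.covar (g n)) =
      (fun n => MTm.var (liftN f n), fun n => MCo.covar (g n)) := by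
  refine Prod.ext ?_ rfl
  funext n; cases n <;> rfl

theorem upC_var (f g : Nat → Nat) :
    upC (fun n => MTm.var (f n)) (fun n => MCo.covar (g n)) =
      (fun n => MTm.var (f n), fun n => MCo.covar (liftN g n)) := by
  refine Prod.ext rfl ?_
  funext n; cases n <;> rfl

mutual
theorem svT : ∀ (t : MTm) (f g : Nat → Nat),
    t.subst (fun n => MTm.var (f n)) (fun n => MCo.covar (g n)) = t.rename f g
  | .var n, _, _ => rfl
  | .mu m, f, g => by simp only [MTm.subst, MTm.rename, upC_var, svM m]
  | .muPair m, f, g => by simp only [MTm.subst, MTm.rename, upC_var, upT_var, svM m]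
  | .injl t, f, g => by simp [MTm.subst, MTm.rename, svT t]
  | .injr t, f, g => by simp [MTm.subst, MTm.rename, svT t]
theorem svC : ∀ (e : MCo) (f g : Nat → Nat),
    e.subst (fun n => MTm.var (f n)) (fun n => MCo.covar (g n)) = e.rename f g
  | .covar n, _, _ => rfl
  | .cons t e, f, g => by simp [MCo.subst, MCo.rename, svT t, svC e]
  | .mutilde m, f, g => by simp only [MCo.subst, MCo.rename, upT_var, svM m]
  | .case m₁ m₂, f, g => by simp only [MCo.subst, MCo.rename, upT_var, svM m₁, svM m₂]
theorem svM : ∀ (m : MMach) (f g : Nat → Nat),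
    m.subst (fun n => MTm.var (f n)) (fun n => MCo.covar (g n)) = m.rename f g
  | .conf t e, f, g => by simp [MMach.subst, MMach.rename, svT t, svC e]
end

theorem sidT (t : MTm) : t.subst MTm.var MCo.covar = t := by
  have := svT t id id
  simpa [ridT] using this
theorem sidC (e : MCo) : e.subst MTm.var MCo.covar = e := by
  have := svC e id id
  simpa [ridC] using this
theorem sidM (m : MMach) : m.subst MTm.var MCo.covar = m := by
  have := svM m id id
  simpa [ridM] using this

end WNaux
namespace WNaux

/-- Extend a term substitution. -/
def consT (u : MTm) (σt : Nat → MTm) : Nat → MTm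
  | 0 => u
  | n + 1 => σt n

/-- Extend a co-term substitution. -/
def consC (e : MCo) (σc : Nat → MCo) : Nat → MCo
  | 0 => e
  | n + 1 => σc n

theorem substT_ext (t : MTm) {σt σt' : Nat → MTm} {σc σc' : Nat → MCo}
    (h1 : ∀ n, σt n = σt' n) (h2 : ∀ n, σc n = σc' n) :
    t.subst σt σc = t.subst σt' σc' := by
  rw [funext h1, funext h2]

theorem substC_ext (e : MCo) {σt σt' : Nat → MTm} {σc σc' : Nat → MCo}
    (h1 : ∀ n, σt n = σt' n) (h2 : ∀ n, σc n = σc' n) :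
    e.subst σt σc = e.subst σt' σc' := by
  rw [funext h1, funext h2]

theorem substM_ext (m : MMach) {σt σt' : Nat → MTm} {σc σc' : Nat → MCo}
    (h1 : ∀ n, σt n = σt' n) (h2 : ∀ n, σc n = σc' n) :
    m.subst σt σc = m.subst σt' σc' := by
  rw [funext h1, funext h2]

theorem ren_substCo (m : MMach) (e : MCo) (f g : Nat → Nat) :
    (m.substCo e).rename f g = (m.rename f (liftN g)).substCo (e.rename f g) := by
  unfold MMach.substCo
  rw [rsM, srM]
  congr 1 <;> funext n <;> cases n <;> rfl

theorem ren_substTm (m : MMach) (u : MTm) (f g : Nat → Nat) :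
    (m.substTm u).rename f g = (m.rename (liftN f) g).substTm (u.rename f g) := by
  unfold MMach.substTm
  rw [rsM, srM]
  congr 1 <;> funext n <;> cases n <;> rfl

theorem ren_substTmCo (m : MMach) (u : MTm) (e : MCo) (f g : Nat → Nat) :
    (m.substTmCo u e).rename f g
      = (m.rename (liftN f) (liftN g)).substTmCo (u.rename f g) (e.rename f g) := by
  unfold MMach.substTmCo
  rw [rsM, srM]
  congr 1 <;> funext n <;> cases n <;> rfl

theorem substCo_upC (m : MMach) (σt : Nat → MTm) (σc : Nat → MCo) (e : MCo) :
    (m.subst (upC σt σc).1 (upC σt σc).2).substCo e = m.subst σt (consC e σc) := by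
  unfold MMach.substCo
  rw [ssM]
  refine substM_ext m ?_ ?_ <;> intro n
  · show (MTm.rename id Nat.succ (σt n)).subst MTm.var
        (fun k => match k with | 0 => e | k + 1 => MCo.covar k) = σt n
    rw [srT]
    exact (substT_ext (σt n) (σt' := MTm.var) (σc' := MCo.covar)
      (fun k => rfl) (fun k => rfl)).trans (sidT _)
  · cases n with
    | zero => rfl
    | succ n =>
        show (MCo.rename id Nat.succ (σc n)).subst MTm.var
            (fun k => match k with | 0 => e | k + 1 => MCo.covar k) = σc n
        rw [srC]
        exact (substC_ext (σc n) (σt' := MTm.var) (σc' := MCo.covar)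
          (fun k => rfl) (fun k => rfl)).trans (sidC _)

theorem substTm_upT (m : MMach) (σt : Nat → MTm) (σc : Nat → MCo) (u : MTm) :
    (m.subst (upT σt σc).1 (upT σt σc).2).substTm u = m.subst (consT u σt) σc := by
  unfold MMach.substTm
  rw [ssM]
  refine substM_ext m ?_ ?_ <;> intro n
  · cases n with
    | zero => rfl
    | succ n =>
        show (MTm.rename Nat.succ id (σt n)).subst
            (fun k => match k with | 0 => u | k + 1 => MTm.var k) MCo.covar = σt n
        rw [srT]
        exact (substT_ext (σt n) (σt' := MTm.var) (σc' := MCo.covar)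
          (fun k => rfl) (fun k => rfl)).trans (sidT _)
  · show (MCo.rename Nat.succ id (σc n)).subst
        (fun k => match k with | 0 => u | k + 1 => MTm.var k) MCo.covar = σc n
    rw [srC]
    exact (substC_ext (σc n) (σt' := MTm.var) (σc' := MCo.covar)
      (fun k => rfl) (fun k => rfl)).trans (sidC _)

theorem substTmCo_up (m : MMach) (σt : Nat → MTm) (σc : Nat → MCo) (u : MTm) (e : MCo) :
    (m.subst (upT (upC σt σc).1 (upC σt σc).2).1
             (upT (upC σt σc).1 (upC σt σc).2).2).substTmCo u e
      = m.subst (consT u σt) (consC e σc) := by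
  unfold MMach.substTmCo
  rw [ssM]
  refine substM_ext m ?_ ?_ <;> intro n
  · cases n with
    | zero => rfl
    | succ n =>
        show (MTm.rename Nat.succ id (MTm.rename id Nat.succ (σt n))).subst
            (fun k => match k with | 0 => u | k + 1 => MTm.var k)
            (fun k => match k with | 0 => e | k + 1 => MCo.covar k) = σt n
        rw [srT, srT]
        exact (substT_ext (σt n) (σt' := MTm.var) (σc' := MCo.covar)
          (fun k => rfl) (fun k => rfl)).trans (sidT _)
  · cases n with
    | zero => rfl
    | succ n =>
        show (MCo.rename Nat.succ id (MCo.rename id Nat.succ (σc n))).subst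
            (fun k => match k with | 0 => u | k + 1 => MTm.var k)
            (fun k => match k with | 0 => e | k + 1 => MCo.covar k) = σc n
        rw [srC, srC]
        exact (substC_ext (σc n) (σt' := MTm.var) (σc' := MCo.covar)
          (fun k => rfl) (fun k => rfl)).trans (sidC _)

theorem substTm_var (m : MMach) (k : Nat) :
    m.substTm (.var k) = m.rename (fun n => match n with | 0 => k | n + 1 => n) id := by
  unfold MMach.substTm
  rw [← svM]
  congr 1 <;> funext n <;> cases n <;> rfl

theorem substCo_covar (m : MMach) (k : Nat) :
    m.substCo (.covar k) = m.rename id (fun n => match n with | 0 => k | n + 1 => n) := by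
  unfold MMach.substCo
  rw [← svM]
  congr 1 <;> funext n <;> cases n <;> rfl

end WNaux
namespace WNaux

mutual
theorem stepT_rename : ∀ {t t' : MTm}, StepT t t' →
    ∀ (f g : Nat → Nat), StepT (t.rename f g) (t'.rename f g)
  | _, _, .mu h, f, g => .mu (stepM_rename h f (liftN g))
  | _, _, .muPair h, f, g => .muPair (stepM_rename h (liftN f) (liftN g))
  | _, _, .injl h, f, g => .injl (stepT_rename h f g)
  | _, _, .injr h, f, g => .injr (stepT_rename h f g)
theorem stepC_rename : ∀ {e e' : MCo}, StepC e e' →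
    ∀ (f g : Nat → Nat), StepC (e.rename f g) (e'.rename f g)
  | _, _, .consl e h, f, g => .consl _ (stepT_rename h f g)
  | _, _, .consr t h, f, g => .consr _ (stepC_rename h f g)
  | _, _, .mutilde h, f, g => .mutilde (stepM_rename h (liftN f) g)
  | _, _, .casel m₂ h, f, g => .casel _ (stepM_rename h (liftN f) g)
  | _, _, .caser m₁ h, f, g => .caser _ (stepM_rename h (liftN f) g)
theorem stepM_rename : ∀ {m m' : MMach}, StepM m m' →
    ∀ (f g : Nat → Nat), StepM (m.rename f g) (m'.rename f g)
  | _, _, .mu m e, f, g => by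
      rw [ren_substCo]
      exact .mu _ _
  | _, _, .mutilde t m, f, g => by
      rw [ren_substTm]
      exact .mutilde _ _
  | _, _, .muPair m u e, f, g => by
      rw [ren_substTmCo]
      exact .muPair _ _ _
  | _, _, .casel t m₁ m₂, f, g => by
      rw [ren_substTm]
      exact .casel _ _ _
  | _, _, .caser t m₁ m₂, f, g => by
      rw [ren_substTm]
      exact .caser _ _ _
  | _, _, .congT e h, f, g => .congT _ (stepT_rename h f g)
  | _, _, .congC t h, f, g => .congC _ (stepC_rename h f g)
end


theorem stepM_inv : ∀ {x y : MMach}, StepM x y →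
    (∃ m e, x = .conf (.mu m) e ∧ y = m.substCo e) ∨
    (∃ t m, x = .conf t (.mutilde m) ∧ y = m.substTm t) ∨
    (∃ m u e, x = .conf (.muPair m) (.cons u e) ∧ y = m.substTmCo u e) ∨
    (∃ t m₁ m₂, x = .conf (.injl t) (.case m₁ m₂) ∧ y = m₁.substTm t) ∨
    (∃ t m₁ m₂, x = .conf (.injr t) (.case m₁ m₂) ∧ y = m₂.substTm t) ∨
    (∃ t t' e, x = .conf t e ∧ y = .conf t' e ∧ StepT t t') ∨
    (∃ t e e', x = .conf t e ∧ y = .conf t e' ∧ StepC e e') := by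
  intro x y h
  cases h with
  | mu m e => exact .inl ⟨m, e, rfl, rfl⟩
  | mutilde t m => exact .inr (.inl ⟨t, m, rfl, rfl⟩)
  | muPair m u e => exact .inr (.inr (.inl ⟨m, u, e, rfl, rfl⟩))
  | casel t m₁ m₂ => exact .inr (.inr (.inr (.inl ⟨t, m₁, m₂, rfl, rfl⟩)))
  | caser t m₁ m₂ => exact .inr (.inr (.inr (.inr (.inl ⟨t, m₁, m₂, rfl, rfl⟩))))
  | congT e hs => exact .inr (.inr (.inr (.inr (.inr (.inl ⟨_, _, e, rfl, rfl, hs⟩)))))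
  | congC t hs => exact .inr (.inr (.inr (.inr (.inr (.inr ⟨t, _, _, rfl, rfl, hs⟩)))))

-- rename shape inversions
theorem ren_eq_mu {t : MTm} {f g m₀} (h : t.rename f g = .mu m₀) :
    ∃ m, t = .mu m ∧ m₀ = m.rename f (liftN g) := by
  cases t <;> simp only [MTm.rename] at h <;> cases h <;> exact ⟨_, rfl, rfl⟩

theorem ren_eq_muPair {t : MTm} {f g m₀} (h : t.rename f g = .muPair m₀) :
    ∃ m, t = .muPair m ∧ m₀ = m.rename (liftN f) (liftN g) := by
  cases t <;> simp only [MTm.rename] at h <;> cases h <;> exact ⟨_, rfl, rfl⟩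

theorem ren_eq_injl {t : MTm} {f g t₀} (h : t.rename f g = .injl t₀) :
    ∃ u, t = .injl u ∧ t₀ = u.rename f g := by
  cases t <;> simp only [MTm.rename] at h <;> cases h <;> exact ⟨_, rfl, rfl⟩

theorem ren_eq_injr {t : MTm} {f g t₀} (h : t.rename f g = .injr t₀) :
    ∃ u, t = .injr u ∧ t₀ = u.rename f g := by
  cases t <;> simp only [MTm.rename] at h <;> cases h <;> exact ⟨_, rfl, rfl⟩

theorem ren_eq_mutilde {e : MCo} {f g m₀} (h : e.rename f g = .mutilde m₀) :
    ∃ m, e = .mutilde m ∧ m₀ = m.rename (liftN f) g := by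
  cases e <;> simp only [MCo.rename] at h <;> cases h <;> exact ⟨_, rfl, rfl⟩

theorem ren_eq_cons {e : MCo} {f g u₀ e₀} (h : e.rename f g = .cons u₀ e₀) :
    ∃ u e', e = .cons u e' ∧ u₀ = u.rename f g ∧ e₀ = e'.rename f g := by
  cases e <;> simp only [MCo.rename] at h <;> cases h <;> exact ⟨_, _, rfl, rfl, rfl⟩

theorem ren_eq_case {e : MCo} {f g m₁ m₂} (h : e.rename f g = .case m₁ m₂) :
    ∃ n₁ n₂, e = .case n₁ n₂ ∧ m₁ = n₁.rename (liftN f) g ∧ m₂ = n₂.rename (liftN f) g := by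
  cases e <;> simp only [MCo.rename] at h <;> cases h <;> exact ⟨_, _, rfl, rfl, rfl⟩

mutual
theorem reflT : ∀ (t : MTm) (f g : Nat → Nat) (y : MTm), StepT (t.rename f g) y →
    ∃ t', StepT t t' ∧ y = t'.rename f g
  | .var n, f, g, y, h => by cases h
  | .mu m, f, g, y, h => by
      cases h with
      | mu h' =>
          obtain ⟨m', hs, rfl⟩ := reflM m f (liftN g) _ h'
          exact ⟨.mu m', .mu hs, rfl⟩
  | .muPair m, f, g, y, h => by
      cases h with
      | muPair h' =>
          obtain ⟨m', hs, rfl⟩ := reflM m (liftN f) (liftN g) _ h'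
          exact ⟨.muPair m', .muPair hs, rfl⟩
  | .injl t, f, g, y, h => by
      cases h with
      | injl h' =>
          obtain ⟨t', hs, rfl⟩ := reflT t f g _ h'
          exact ⟨.injl t', .injl hs, rfl⟩
  | .injr t, f, g, y, h => by
      cases h with
      | injr h' =>
          obtain ⟨t', hs, rfl⟩ := reflT t f g _ h'
          exact ⟨.injr t', .injr hs, rfl⟩
theorem reflC : ∀ (e : MCo) (f g : Nat → Nat) (y : MCo), StepC (e.rename f g) y →
    ∃ e', StepC e e' ∧ y = e'.rename f g
  | .covar n, f, g, y, h => by cases h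
  | .cons t e, f, g, y, h => by
      cases h with
      | consl _ h' =>
          obtain ⟨t', hs, rfl⟩ := reflT t f g _ h'
          exact ⟨.cons t' e, .consl _ hs, rfl⟩
      | consr _ h' =>
          obtain ⟨e', hs, rfl⟩ := reflC e f g _ h'
          exact ⟨.cons t e', .consr _ hs, rfl⟩
  | .mutilde m, f, g, y, h => by
      cases h with
      | mutilde h' =>
          obtain ⟨m', hs, rfl⟩ := reflM m (liftN f) g _ h'
          exact ⟨.mutilde m', .mutilde hs, rfl⟩
  | .case m₁ m₂, f, g, y, h => by
      cases h with
      | casel _ h' =>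
          obtain ⟨m₁', hs, rfl⟩ := reflM m₁ (liftN f) g _ h'
          exact ⟨.case m₁' m₂, .casel _ hs, rfl⟩
      | caser _ h' =>
          obtain ⟨m₂', hs, rfl⟩ := reflM m₂ (liftN f) g _ h'
          exact ⟨.case m₁ m₂', .caser _ hs, rfl⟩
theorem reflM : ∀ (m : MMach) (f g : Nat → Nat) (y : MMach), StepM (m.rename f g) y →
    ∃ m', StepM m m' ∧ y = m'.rename f g
  | .conf t e, f, g, y, h => by
      rcases stepM_inv h with
        ⟨m, e₀, hx, hy⟩ | ⟨t₀, m, hx, hy⟩ | ⟨m, u, e₀, hx, hy⟩ | ⟨t₀, m₁, m₂, hx, hy⟩ |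
        ⟨t₀, m₁, m₂, hx, hy⟩ | ⟨t₀, t', e₀, hx, hy, hs⟩ | ⟨t₀, e₀, e', hx, hy, hs⟩
      · injection hx with h1 h2
        obtain ⟨tm, rfl, rfl⟩ := ren_eq_mu h1
        subst h2; subst hy
        exact ⟨tm.substCo e, .mu _ _, (ren_substCo _ _ _ _).symm⟩
      · injection hx with h1 h2
        obtain ⟨em, rfl, rfl⟩ := ren_eq_mutilde h2
        subst h1; subst hy
        exact ⟨em.substTm t, .mutilde _ _, (ren_substTm _ _ _ _).symm⟩
      · injection hx with h1 h2
        obtain ⟨tm, rfl, rfl⟩ := ren_eq_muPair h1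
        obtain ⟨u', e'', rfl, rfl, rfl⟩ := ren_eq_cons h2
        subst hy
        exact ⟨tm.substTmCo u' e'', .muPair _ _ _, (ren_substTmCo _ _ _ _ _).symm⟩
      · injection hx with h1 h2
        obtain ⟨u, rfl, rfl⟩ := ren_eq_injl h1
        obtain ⟨n₁, n₂, rfl, rfl, rfl⟩ := ren_eq_case h2
        subst hy
        exact ⟨n₁.substTm u, .casel _ _ _, (ren_substTm _ _ _ _).symm⟩
      · injection hx with h1 h2
        obtain ⟨u, rfl, rfl⟩ := ren_eq_injr h1
        obtain ⟨n₁, n₂, rfl, rfl, rfl⟩ := ren_eq_case h2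
        subst hy
        exact ⟨n₂.substTm u, .caser _ _ _, (ren_substTm _ _ _ _).symm⟩
      · injection hx with h1 h2
        subst h1; subst h2; subst hy
        obtain ⟨t1, hs1, rfl⟩ := reflT t f g _ hs
        exact ⟨.conf t1 e, .congT _ hs1, rfl⟩
      · injection hx with h1 h2
        subst h1; subst h2; subst hy
        obtain ⟨e1, hs1, rfl⟩ := reflC e f g _ hs
        exact ⟨.conf t e1, .congC _ hs1, rfl⟩
end

end WNaux
namespace WNaux

def NT (t : MTm) : Prop := ¬∃ t', StepT t t'
def NC (e : MCo) : Prop := ¬∃ e', StepC e e'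
def NM (m : MMach) : Prop := ¬∃ m', StepM m m'

/-- The pole: configurations that reach a normal form. -/
def Pole (m : MMach) : Prop := ∃ n, Relation.ReflTransGen StepM m n ∧ NM n

theorem pole_step {m m' : MMach} (h : StepM m m') (hp : Pole m') : Pole m := by
  obtain ⟨n, r, hn⟩ := hp
  exact ⟨n, .head h r, hn⟩

theorem NM_rename {m : MMach} (f g : Nat → Nat) (h : NM m) : NM (m.rename f g) := by
  rintro ⟨y, hy⟩
  obtain ⟨m', hs, -⟩ := reflM m f g y hy
  exact h ⟨m', hs⟩

theorem rtg_rename {m n : MMach} (f g : Nat → Nat)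
    (h : Relation.ReflTransGen StepM m n) :
    Relation.ReflTransGen StepM (m.rename f g) (n.rename f g) :=
  Relation.ReflTransGen.lift (fun x : MMach => x.rename f g) (fun _ _ s => stepM_rename s f g) _ _ h

theorem rtg_unrename : ∀ {x n : MMach}, Relation.ReflTransGen StepM x n →
    ∀ (m : MMach) (f g : Nat → Nat), x = m.rename f g →
    ∃ n₀, Relation.ReflTransGen StepM m n₀ ∧ n = n₀.rename f g := by
  intro x n h
  induction h using Relation.ReflTransGen.head_induction_on with
  | refl => intro m f g hx; exact ⟨m, .refl, hx⟩
  | head s r ih =>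
      intro m f g hx; subst hx
      obtain ⟨m', hs, rfl⟩ := reflM _ _ _ _ s
      obtain ⟨n₀, r₀, rfl⟩ := ih m' f g rfl
      exact ⟨n₀, .head hs r₀, rfl⟩

theorem pole_rename {m : MMach} (f g : Nat → Nat) (h : Pole m) : Pole (m.rename f g) := by
  obtain ⟨n, r, hn⟩ := h
  exact ⟨n.rename f g, rtg_rename f g r, NM_rename f g hn⟩

theorem pole_unrename {m : MMach} {f g : Nat → Nat} (h : Pole (m.rename f g)) :
    Pole m := by
  obtain ⟨n, r, hn⟩ := h
  obtain ⟨n₀, r₀, rfl⟩ := rtg_unrename r m f g rfl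
  refine ⟨n₀, r₀, ?_⟩
  rintro ⟨y, hy⟩
  exact hn ⟨y.rename f g, stepM_rename hy f g⟩

-- congruence lifts to reflexive-transitive closure
theorem rtgM_congT {t t' : MTm} (e : MCo) (h : Relation.ReflTransGen StepT t t') :
    Relation.ReflTransGen StepM (.conf t e) (.conf t' e) :=
  Relation.ReflTransGen.lift (fun x => MMach.conf x e) (fun _ _ s => StepM.congT _ s) _ _ h

theorem rtgM_congC (t : MTm) {e e' : MCo} (h : Relation.ReflTransGen StepC e e') :
    Relation.ReflTransGen StepM (.conf t e) (.conf t e') :=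
  Relation.ReflTransGen.lift (fun x => MMach.conf t x) (fun _ _ s => StepM.congC _ s) _ _ h

theorem rtgT_mu {m m' : MMach} (h : Relation.ReflTransGen StepM m m') :
    Relation.ReflTransGen StepT (.mu m) (.mu m') :=
  Relation.ReflTransGen.lift MTm.mu (fun _ _ s => StepT.mu s) _ _ h

theorem rtgT_muPair {m m' : MMach} (h : Relation.ReflTransGen StepM m m') :
    Relation.ReflTransGen StepT (.muPair m) (.muPair m') :=
  Relation.ReflTransGen.lift MTm.muPair (fun _ _ s => StepT.muPair s) _ _ h

theorem rtgT_injl {t t' : MTm} (h : Relation.ReflTransGen StepT t t') :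
    Relation.ReflTransGen StepT (.injl t) (.injl t') :=
  Relation.ReflTransGen.lift MTm.injl (fun _ _ s => StepT.injl s) _ _ h

theorem rtgT_injr {t t' : MTm} (h : Relation.ReflTransGen StepT t t') :
    Relation.ReflTransGen StepT (.injr t) (.injr t') :=
  Relation.ReflTransGen.lift MTm.injr (fun _ _ s => StepT.injr s) _ _ h

theorem rtgC_consl {t t' : MTm} (e : MCo) (h : Relation.ReflTransGen StepT t t') :
    Relation.ReflTransGen StepC (.cons t e) (.cons t' e) :=
  Relation.ReflTransGen.lift (fun x => MCo.cons x e) (fun _ _ s => StepC.consl _ s) _ _ h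

theorem rtgC_consr (t : MTm) {e e' : MCo} (h : Relation.ReflTransGen StepC e e') :
    Relation.ReflTransGen StepC (.cons t e) (.cons t e') :=
  Relation.ReflTransGen.lift (fun x => MCo.cons t x) (fun _ _ s => StepC.consr _ s) _ _ h

theorem rtgC_casel {m₁ m₁' : MMach} (m₂ : MMach)
    (h : Relation.ReflTransGen StepM m₁ m₁') :
    Relation.ReflTransGen StepC (.case m₁ m₂) (.case m₁' m₂) :=
  Relation.ReflTransGen.lift (fun x => MCo.case x m₂) (fun _ _ s => StepC.casel _ s) _ _ h

theorem rtgC_caser (m₁ : MMach) {m₂ m₂' : MMach}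
    (h : Relation.ReflTransGen StepM m₂ m₂') :
    Relation.ReflTransGen StepC (.case m₁ m₂) (.case m₁ m₂') :=
  Relation.ReflTransGen.lift (fun x => MCo.case m₁ x) (fun _ _ s => StepC.caser _ s) _ _ h

-- normality helpers
theorem NT_var (n : Nat) : NT (.var n) := by rintro ⟨t, ht⟩; cases ht

theorem NC_covar (k : Nat) : NC (.covar k) := by rintro ⟨e, he⟩; cases he

theorem NT_mu {m : MMach} (h : NM m) : NT (.mu m) := by
  rintro ⟨t, ht⟩; cases ht with | mu hs => exact h ⟨_, hs⟩

theorem NT_muPair {m : MMach} (h : NM m) : NT (.muPair m) := by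
  rintro ⟨t, ht⟩; cases ht with | muPair hs => exact h ⟨_, hs⟩

theorem NT_injl {t : MTm} (h : NT t) : NT (.injl t) := by
  rintro ⟨t', ht⟩; cases ht with | injl hs => exact h ⟨_, hs⟩

theorem NT_injr {t : MTm} (h : NT t) : NT (.injr t) := by
  rintro ⟨t', ht⟩; cases ht with | injr hs => exact h ⟨_, hs⟩

theorem NC_cons {u : MTm} {e : MCo} (hu : NT u) (he : NC e) : NC (.cons u e) := by
  rintro ⟨e', he'⟩
  cases he' with
  | consl _ hs => exact hu ⟨_, hs⟩
  | consr _ hs => exact he ⟨_, hs⟩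

theorem NC_case {m₁ m₂ : MMach} (h₁ : NM m₁) (h₂ : NM m₂) : NC (.case m₁ m₂) := by
  rintro ⟨e', he'⟩
  cases he' with
  | casel _ hs => exact h₁ ⟨_, hs⟩
  | caser _ hs => exact h₂ ⟨_, hs⟩

theorem NM_var_covar (n k : Nat) : NM (.conf (.var n) (.covar k)) := by
  rintro ⟨y, hy⟩
  cases hy with
  | congT _ hs => exact NT_var n ⟨_, hs⟩
  | congC _ hs => exact NC_covar k ⟨_, hs⟩

theorem NM_var_cons {u : MTm} {e : MCo} (n : Nat) (hu : NT u) (he : NC e) :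
    NM (.conf (.var n) (.cons u e)) := by
  rintro ⟨y, hy⟩
  cases hy with
  | congT _ hs => exact NT_var n ⟨_, hs⟩
  | congC _ hs => exact NC_cons hu he ⟨_, hs⟩

theorem NM_var_case {m₁ m₂ : MMach} (n : Nat) (h₁ : NM m₁) (h₂ : NM m₂) :
    NM (.conf (.var n) (.case m₁ m₂)) := by
  rintro ⟨y, hy⟩
  cases hy with
  | congT _ hs => exact NT_var n ⟨_, hs⟩
  | congC _ hs => exact NC_case h₁ h₂ ⟨_, hs⟩

theorem NM_injl_covar {t : MTm} (k : Nat) (h : NT t) : NM (.conf (.injl t) (.covar k)) := by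
  rintro ⟨y, hy⟩
  cases hy with
  | congT _ hs => exact NT_injl h ⟨_, hs⟩
  | congC _ hs => exact NC_covar k ⟨_, hs⟩

theorem NM_injr_covar {t : MTm} (k : Nat) (h : NT t) : NM (.conf (.injr t) (.covar k)) := by
  rintro ⟨y, hy⟩
  cases hy with
  | congT _ hs => exact NT_injr h ⟨_, hs⟩
  | congC _ hs => exact NC_covar k ⟨_, hs⟩

theorem NM_muPair_covar {m : MMach} (k : Nat) (h : NM m) :
    NM (.conf (.muPair m) (.covar k)) := by
  rintro ⟨y, hy⟩
  cases hy with
  | congT _ hs => exact NT_muPair h ⟨_, hs⟩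
  | congC _ hs => exact NC_covar k ⟨_, hs⟩

def WT (t : MTm) : Prop := ∃ t', Relation.ReflTransGen StepT t t' ∧ NT t'
def WC (e : MCo) : Prop := ∃ e', Relation.ReflTransGen StepC e e' ∧ NC e'

/-- Extraction: a configuration against a covariable normalizes iff the term does. -/
theorem WT_of_pole_covar : ∀ {t : MTm} {k : Nat}, Pole (.conf t (.covar k)) → WT t := by
  suffices h : ∀ {x n : MMach}, Relation.ReflTransGen StepM x n → NM n →
      ∀ (t : MTm) (k : Nat), x = .conf t (.covar k) → WT t by
    rintro t k ⟨n, r, hn⟩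
    exact h r hn t k rfl
  intro x n h
  induction h using Relation.ReflTransGen.head_induction_on with
  | refl =>
      intro hn t k hx; subst hx
      exact ⟨t, .refl, fun ⟨t', ht⟩ => hn ⟨_, .congT _ ht⟩⟩
  | head s r ih =>
      intro hn t k hx; subst hx
      rcases stepM_inv s with
        ⟨m, e₀, hx, hy⟩ | ⟨t₀, m, hx, hy⟩ | ⟨m, u, e₀, hx, hy⟩ | ⟨t₀, m₁, m₂, hx, hy⟩ |
        ⟨t₀, m₁, m₂, hx, hy⟩ | ⟨t₀, t', e₀, hx, hy, hs⟩ | ⟨t₀, e₀, e', hx, hy, hs⟩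
      · injection hx with h1 h2
        subst h1
        have hp : Pole (m.substCo (.covar k)) := by
          rw [← h2] at hy; subst hy; exact ⟨n, r, hn⟩
        rw [substCo_covar] at hp
        obtain ⟨m', rm, hm⟩ := pole_unrename hp
        exact ⟨.mu m', rtgT_mu rm, NT_mu hm⟩
      · injection hx with h1 h2; cases h2
      · injection hx with h1 h2; cases h2
      · injection hx with h1 h2; cases h2
      · injection hx with h1 h2; cases h2
      · injection hx with h1 h2
        subst h1; subst h2; subst hy
        obtain ⟨t'', rt, hnt⟩ := ih hn t' k rfl
        exact ⟨t'', .head hs rt, hnt⟩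
      · injection hx with h1 h2
        subst h2
        cases hs

end WNaux
namespace WNaux

/-- Falsity witnesses for each type. -/
def Fls : Ty → MCo → Prop
  | .base, e => e = .covar 0
  | .arrow A B, e => e = .covar 0 ∨ ∃ u e', e = .cons u e' ∧
      (∀ (ft fc : Nat → Nat) d, Fls A d → Pole (.conf (u.rename ft fc) d)) ∧ Fls B e'
  | .sum A B, e => e = .covar 0 ∨ ∃ m₁ m₂, e = .case m₁ m₂ ∧
      (∀ u, (∀ (ft fc : Nat → Nat) d, Fls A d → Pole (.conf (u.rename ft fc) d)) →
        Pole (m₁.substTm u)) ∧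
      (∀ u, (∀ (ft fc : Nat → Nat) d, Fls B d → Pole (.conf (u.rename ft fc) d)) →
        Pole (m₂.substTm u))

/-- Truth: orthogonal to all falsity witnesses. -/
def Tru (A : Ty) (t : MTm) : Prop := ∀ e, Fls A e → Pole (.conf t e)

/-- Truth under all renamings. -/
def RTru (A : Ty) (t : MTm) : Prop :=
  ∀ (ft fc : Nat → Nat) (e : MCo), Fls A e → Pole (.conf (t.rename ft fc) e)

theorem Tru_of_RTru {A t} (h : RTru A t) : Tru A t := by
  intro e he
  have := h id id e he
  rwa [ridT] at this

theorem RTru_rename {A t} (h : RTru A t) (f g : Nat → Nat) : RTru A (t.rename f g) := by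
  intro ft fc e he
  rw [rrT]
  exact h _ _ e he

theorem covar_fls (A : Ty) : Fls A (.covar 0) := by
  cases A with
  | base => rfl
  | arrow A B => exact Or.inl rfl
  | sum A B => exact Or.inl rfl

theorem termWN_of_Tru {A t} (h : Tru A t) : WT t :=
  WT_of_pole_covar (h _ (covar_fls A))

theorem WM_of_pole_substTm_var {m : MMach} (h : Pole (m.substTm (.var 0))) : Pole m := by
  rw [substTm_var] at h
  exact pole_unrename h

/-- Variables are true at every type, and falsity witnesses are weakly normalizing. -/
theorem typeLemma : ∀ A : Ty, (∀ n, Tru A (.var n)) ∧ (∀ e, Fls A e → WC e) := by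
  intro A
  induction A with
  | base =>
      constructor
      · rintro n e rfl
        exact ⟨_, .refl, NM_var_covar n 0⟩
      · rintro e rfl
        exact ⟨_, .refl, NC_covar 0⟩
  | arrow A B ihA ihB =>
      constructor
      · rintro n e (rfl | ⟨u, e', rfl, hu, he'⟩)
        · exact ⟨_, .refl, NM_var_covar n 0⟩
        · obtain ⟨u', ru, hnu⟩ := termWN_of_Tru (Tru_of_RTru hu)
          obtain ⟨e'', re, hne⟩ := ihB.2 e' he'
          exact ⟨.conf (.var n) (.cons u' e''),
            rtgM_congC _ ((rtgC_consl _ ru).trans (rtgC_consr _ re)),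
            NM_var_cons n hnu hne⟩
      · rintro e (rfl | ⟨u, e', rfl, hu, he'⟩)
        · exact ⟨_, .refl, NC_covar 0⟩
        · obtain ⟨u', ru, hnu⟩ := termWN_of_Tru (Tru_of_RTru hu)
          obtain ⟨e'', re, hne⟩ := ihB.2 e' he'
          exact ⟨.cons u' e'', (rtgC_consl _ ru).trans (rtgC_consr _ re),
            NC_cons hnu hne⟩
  | sum A B ihA ihB =>
      have hvarA : RTru A (.var 0) := fun ft fc e he => ihA.1 (ft 0) e he
      have hvarB : RTru B (.var 0) := fun ft fc e he => ihB.1 (ft 0) e he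
      constructor
      · rintro n e (rfl | ⟨m₁, m₂, rfl, h₁, h₂⟩)
        · exact ⟨_, .refl, NM_var_covar n 0⟩
        · obtain ⟨m₁', r₁, hn₁⟩ := WM_of_pole_substTm_var (h₁ _ hvarA)
          obtain ⟨m₂', r₂, hn₂⟩ := WM_of_pole_substTm_var (h₂ _ hvarB)
          exact ⟨.conf (.var n) (.case m₁' m₂'),
            rtgM_congC _ ((rtgC_casel _ r₁).trans (rtgC_caser _ r₂)),
            NM_var_case n hn₁ hn₂⟩
      · rintro e (rfl | ⟨m₁, m₂, rfl, h₁, h₂⟩)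
        · exact ⟨_, .refl, NC_covar 0⟩
        · obtain ⟨m₁', r₁, hn₁⟩ := WM_of_pole_substTm_var (h₁ _ hvarA)
          obtain ⟨m₂', r₂, hn₂⟩ := WM_of_pole_substTm_var (h₂ _ hvarB)
          exact ⟨.case m₁' m₂', (rtgC_casel _ r₁).trans (rtgC_caser _ r₂),
            NC_case hn₁ hn₂⟩

/-- Adequacy of the translation. -/
theorem adequacy : ∀ {Γ : List Ty} {t : LTm} {A : Ty}, HasTy Γ t A →
    ∀ (σt : Nat → MTm) (σc : Nat → MCo),
      (∀ n B, Γ[n]? = some B → RTru B (σt n)) →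
      Tru A ((transl t).subst σt σc) := by
  intro Γ t A ht
  induction ht with
  | @var Γ n A h =>
      intro σt σc hσ
      exact Tru_of_RTru (hσ n A h)
  | @lam Γ t A B ht iht =>
      intro σt σc hσ
      have hext : ∀ (u : MTm), RTru A u →
          ∀ n B', (A :: Γ)[n]? = some B' → RTru B' (consT u σt n) := by
        intro u hu n B' hn
        cases n with
        | zero => injection hn with hn; subst hn; exact hu
        | succ n => exact hσ n B' hn
      rintro e (rfl | ⟨u, e', rfl, hu, he'⟩)
      · -- normalize under the binder
        have hτ : ∀ n B', (A :: Γ)[n]? = some B' →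
            RTru B' ((upT (upC σt σc).1 (upC σt σc).2).1 n) := by
          intro n B' hn
          cases n with
          | zero =>
              injection hn with hn; subst hn
              exact fun ft fc e he => (typeLemma _).1 (ft 0) e he
          | succ n =>
              have : RTru B' ((σt n).rename id Nat.succ) :=
                RTru_rename (hσ n B' hn) id Nat.succ
              exact RTru_rename this Nat.succ id
        have hM := iht (upT (upC σt σc).1 (upC σt σc).2).1
          (upT (upC σt σc).1 (upC σt σc).2).2 hτ (.covar 0) (covar_fls B)
        obtain ⟨N, rN, hN⟩ := hM
        exact ⟨.conf (.muPair N) (.covar 0), rtgM_congT _ (rtgT_muPair rN),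
          NM_muPair_covar 0 hN⟩
      · refine pole_step (StepM.muPair _ u e') ?_
        rw [substTmCo_up]
        exact iht (consT u σt) (consC e' σc) (hext u hu) e' he'
  | @app Γ t u A B ht hu iht ihu =>
      intro σt σc hσ e he
      refine pole_step (StepM.mu _ e) ?_
      rw [substCo_upC]
      have hruσ : RTru A ((transl u).subst σt (consC e σc)) := by
        intro ft fc d hd
        rw [rsT]
        exact ihu _ _ (fun n B' hn => RTru_rename (hσ n B' hn) ft fc) d hd
      exact iht σt (consC e σc) hσ _ (Or.inr ⟨_, _, rfl, hruσ, he⟩)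
  | @injl Γ t A B ht iht =>
      intro σt σc hσ
      have hrt : RTru A ((transl t).subst σt σc) := by
        intro ft fc d hd
        rw [rsT]
        exact iht _ _ (fun n B' hn => RTru_rename (hσ n B' hn) ft fc) d hd
      rintro e (rfl | ⟨m₁, m₂, rfl, h₁, h₂⟩)
      · obtain ⟨u', ru, hnu⟩ := termWN_of_Tru (iht σt σc hσ)
        exact ⟨.conf (.injl u') (.covar 0), rtgM_congT _ (rtgT_injl ru),
          NM_injl_covar 0 hnu⟩
      · exact pole_step (StepM.casel _ m₁ m₂) (h₁ _ hrt)
  | @injr Γ t A B ht iht =>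
      intro σt σc hσ
      have hrt : RTru B ((transl t).subst σt σc) := by
        intro ft fc d hd
        rw [rsT]
        exact iht _ _ (fun n B' hn => RTru_rename (hσ n B' hn) ft fc) d hd
      rintro e (rfl | ⟨m₁, m₂, rfl, h₁, h₂⟩)
      · obtain ⟨u', ru, hnu⟩ := termWN_of_Tru (iht σt σc hσ)
        exact ⟨.conf (.injr u') (.covar 0), rtgM_congT _ (rtgT_injr ru),
          NM_injr_covar 0 hnu⟩
      · exact pole_step (StepM.caser _ m₁ m₂) (h₂ _ hrt)
  | @case Γ t u₁ u₂ A B C ht hu₁ hu₂ iht ihu₁ ihu₂ =>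
      intro σt σc hσ e he
      refine pole_step (StepM.mu _ e) ?_
      rw [substCo_upC]
      refine iht σt (consC e σc) hσ _ (Or.inr ⟨_, _, rfl, ?_, ?_⟩)
      · intro u hu
        rw [substTm_upT]
        have hext : ∀ n B', (A :: Γ)[n]? = some B' → RTru B' (consT u σt n) := by
          intro n B' hn
          cases n with
          | zero => injection hn with hn; subst hn; exact hu
          | succ n => exact hσ n B' hn
        exact ihu₁ (consT u σt) (consC e σc) hext e he
      · intro u hu
        rw [substTm_upT]
        have hext : ∀ n B', (B :: Γ)[n]? = some B' → RTru B' (consT u σt n) := by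
          intro n B' hn
          cases n with
          | zero => injection hn with hn; subst hn; exact hu
          | succ n => exact hσ n B' hn
        exact ihu₂ (consT u σt) (consC e σc) hext e he

end WNaux
/-- Weak normalization of the simply-typed λ-calculus with sums: for every
closed well-typed term ⊢ t : A, the μμ̃ configuration ⟨⟦t⟧ | α⟩ reduces to a
normal configuration. -/
theorem weak_normalization {t : LTm} {A : Ty} (ht : HasTy [] t A) :
    ∃ m : MMach, Relation.ReflTransGen StepM (.conf (transl t) (.covar 0)) m ∧
      ¬∃ m', StepM m m' := by
  have h := WNaux.adequacy ht MTm.var MCo.covar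
    (fun n B hn => absurd hn (by cases n <;> simp))
  rw [WNaux.sidT] at h
  exact h (.covar 0) (WNaux.covar_fls A)
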